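/- Let m ≥ 1 and let α₁, …, α_m be nonzero linear functionals on ℝ², and set K = {x ∈ ℝ² : α_i(x) ≥ 0 for all i = 1, …, m}. If K has nonempty interior, then there exist indices i, j (possibly equal) such that K = {x ∈ ℝ² : α_i(x) ≥ 0 and α_j(x) ≥ 0}. -/

import Mathlib

/-- A convex polyhedral cone in ℝ², cut out by finitely many nonzero linear functionals, with
nonempty interior is already cut out by (at most) two of the functionals. -/
theorem stmt_11 (m : ℕ) (hm : 1 ≤ m)
    (α : Fin m → Module.Dual ℝ (ℝ × ℝ))
    (hα : ∀ i, α i ≠ 0)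
    (K : Set (ℝ × ℝ)) (hK : K = {x | ∀ i, 0 ≤ α i x})
    (hint : (interior K).Nonempty) :
    ∃ i j, K = {x | 0 ≤ α i x ∧ 0 ≤ α j x} := by
  obtain ⟨x₀, hx₀⟩ := hint
  have hx₀K : ∀ i, 0 ≤ α i x₀ := by
    have h := interior_subset hx₀
    rw [hK] at h
    exact h
  have hmem : K ∈ nhds x₀ := mem_interior_iff_mem_nhds.mp hx₀
  have hpos : ∀ i, 0 < α i x₀ := by
    intro i
    rcases (hx₀K i).lt_or_eq with h | h
    · exact h
    · exfalso
      obtain ⟨v, hv⟩ : ∃ v, α i v < 0 := by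
        by_contra hc
        push_neg at hc
        apply hα i
        apply LinearMap.ext
        intro v
        have h1 := hc v
        have h2 := hc (-v)
        rw [map_neg] at h2
        simp only [LinearMap.zero_apply]
        linarith
      have hcont : Filter.Tendsto (fun t : ℝ => x₀ + t • v) (nhds 0) (nhds x₀) := by
        have hc : Continuous fun t : ℝ => x₀ + t • v := by continuity
        simpa using hc.tendsto 0
      have hev : ∀ᶠ t : ℝ in nhds 0, x₀ + t • v ∈ K := hcont.eventually hmem
      have hev' : ∀ᶠ t : ℝ in nhdsWithin 0 (Set.Ioi 0), (x₀ + t • v ∈ K ∧ 0 < t) := by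
        filter_upwards [hev.filter_mono nhdsWithin_le_nhds, self_mem_nhdsWithin] with t ht1 ht2
        exact ⟨ht1, ht2⟩
      obtain ⟨t, htK, ht0⟩ := hev'.exists
      rw [hK] at htK
      have h3 := htK i
      rw [map_add, map_smul, smul_eq_mul] at h3
      nlinarith
  have hx₀ne : x₀ ≠ 0 := by
    intro h
    have h1 := hpos ⟨0, by omega⟩
    rw [h, map_zero] at h1
    exact lt_irrefl 0 h1
  have hn : 0 < x₀.1 ^ 2 + x₀.2 ^ 2 := by
    have h : x₀.1 ≠ 0 ∨ x₀.2 ≠ 0 := by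
      by_contra hc
      push_neg at hc
      exact hx₀ne (Prod.ext hc.1 hc.2)
    rcases h with h | h <;> positivity
  have hn' : x₀.1 ^ 2 + x₀.2 ^ 2 ≠ 0 := ne_of_gt hn
  set w : ℝ × ℝ := (x₀.2, -x₀.1) with hw
  have hdecomp : ∀ (i : Fin m) (x : ℝ × ℝ),
      α i x = ((x.1 * x₀.1 + x.2 * x₀.2) / (x₀.1 ^ 2 + x₀.2 ^ 2)) * α i x₀
            + ((x.1 * x₀.2 - x.2 * x₀.1) / (x₀.1 ^ 2 + x₀.2 ^ 2)) * α i w := by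
    intro i x
    have hx : x = ((x.1 * x₀.1 + x.2 * x₀.2) / (x₀.1 ^ 2 + x₀.2 ^ 2)) • x₀
             + ((x.1 * x₀.2 - x.2 * x₀.1) / (x₀.1 ^ 2 + x₀.2 ^ 2)) • w := by
      apply Prod.ext
      · simp only [Prod.fst_add, Prod.smul_fst, smul_eq_mul, hw]
        field_simp
        ring
      · simp only [Prod.snd_add, Prod.smul_snd, smul_eq_mul, hw]
        field_simp
        ring
    conv_lhs => rw [hx]
    rw [map_add, map_smul, map_smul, smul_eq_mul, smul_eq_mul]
  have key : ∀ (i j k : Fin m) (a b : ℝ),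
      α k x₀ = a * α i x₀ + b * α j x₀ →
      α k w = a * α i w + b * α j w →
      ∀ x, α k x = a * α i x + b * α j x := by
    intro i j k a b h1 h2 x
    rw [hdecomp k x, hdecomp i x, hdecomp j x, h1, h2]
    ring
  obtain ⟨i₀, -, hi₀⟩ := Finset.exists_max_image (Finset.univ : Finset (Fin m))
      (fun i => α i w / α i x₀) ⟨⟨0, by omega⟩, Finset.mem_univ _⟩
  obtain ⟨j₀, -, hj₀⟩ := Finset.exists_min_image (Finset.univ : Finset (Fin m))
      (fun i => α i w / α i x₀) ⟨⟨0, by omega⟩, Finset.mem_univ _⟩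
  refine ⟨i₀, j₀, ?_⟩
  rw [hK]
  ext x
  simp only [Set.mem_setOf_eq]
  constructor
  · intro h; exact ⟨h i₀, h j₀⟩
  · rintro ⟨h1, h2⟩ k
    have hri : α k w / α k x₀ ≤ α i₀ w / α i₀ x₀ := hi₀ k (Finset.mem_univ k)
    have hrj : α j₀ w / α j₀ x₀ ≤ α k w / α k x₀ := hj₀ k (Finset.mem_univ k)
    have hpi := hpos i₀
    have hpj := hpos j₀
    have hpk := hpos k
    by_cases hD : α j₀ w / α j₀ x₀ = α i₀ w / α i₀ x₀
    · -- all ratios equal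
      have hr : α k w / α k x₀ = α i₀ w / α i₀ x₀ := le_antisymm hri (hD ▸ hrj)
      have hQk : α k w = (α k x₀ / α i₀ x₀) * α i₀ w + 0 * α j₀ w := by
        rw [div_eq_div_iff hpk.ne' hpi.ne'] at hr
        field_simp
        linarith
      have hPk : α k x₀ = (α k x₀ / α i₀ x₀) * α i₀ x₀ + 0 * α j₀ x₀ := by
        field_simp
        ring
      have hk := key i₀ j₀ k (α k x₀ / α i₀ x₀) 0 hPk hQk x
      have hc : 0 ≤ α k x₀ / α i₀ x₀ := div_nonneg hpk.le hpi.le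
      rw [hk]
      nlinarith
    · have hDlt : α j₀ w / α j₀ x₀ < α i₀ w / α i₀ x₀ :=
        lt_of_le_of_ne (le_trans hrj hri) hD
      rw [div_lt_div_iff₀ hpj hpi] at hDlt
      set D : ℝ := α j₀ x₀ * α i₀ w - α j₀ w * α i₀ x₀ with hDdef
      have hDpos : 0 < D := by rw [hDdef]; nlinarith
      set a : ℝ := (α j₀ x₀ * α k w - α j₀ w * α k x₀) / D with ha
      set b : ℝ := (α i₀ w * α k x₀ - α i₀ x₀ * α k w) / D with hb
      have hanum : 0 ≤ α j₀ x₀ * α k w - α j₀ w * α k x₀ := by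
        rw [div_le_div_iff₀ hpj hpk] at hrj
        nlinarith
      have hbnum : 0 ≤ α i₀ w * α k x₀ - α i₀ x₀ * α k w := by
        rw [div_le_div_iff₀ hpk hpi] at hri
        nlinarith
      have ha0 : 0 ≤ a := div_nonneg hanum hDpos.le
      have hb0 : 0 ≤ b := div_nonneg hbnum hDpos.le
      have hPk : α k x₀ = a * α i₀ x₀ + b * α j₀ x₀ := by
        rw [ha, hb, hDdef]
        have hDne : α j₀ x₀ * α i₀ w - α j₀ w * α i₀ x₀ ≠ 0 := hDpos.ne'
        field_simp
        ring
      have hQk : α k w = a * α i₀ w + b * α j₀ w := by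
        rw [ha, hb, hDdef]
        have hDne : α j₀ x₀ * α i₀ w - α j₀ w * α i₀ x₀ ≠ 0 := hDpos.ne'
        field_simp
        ring
      have hk := key i₀ j₀ k a b hPk hQk x
      rw [hk]
      have := mul_nonneg ha0 h1
      have := mul_nonneg hb0 h2
      linarith
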